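/- Define Q₂(τ₁,τ₂) = -q/(conj(τ₁) - τ₂) + iq/(2v₁) with v₁ = Im(τ₁). Then for every g = [[a,b],[c,d]] in SL(2,ℝ), Q₂(gτ₁, gτ₂) = (c·conj(τ₁)+d)²·Q₂(τ₁, τ₂). -/

import Mathlib

open Complex

/-- The auxiliary function `Q₂`. -/
noncomputable def Q₂ (q : ℂ) (τ₁ τ₂ : ℂ) : ℂ :=
  -(q / ((starRingEnd ℂ) τ₁ - τ₂)) + Complex.I * q / (2 * (τ₁.im : ℂ))

/-- anti-holomorphic weight-2 covariance of `Q₂` in the first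
variable under the diagonal Möbius action of `SL(2,ℝ)`. -/
theorem Q₂_weight_two_covariance
    (q : ℂ) (a b c d : ℝ) (hdet : a * d - b * c = 1)
    (τ₁ τ₂ : ℂ) (h₁ : 0 < τ₁.im) (h₂ : 0 < τ₂.im) :
    Q₂ q (((a : ℂ) * τ₁ + b) / ((c : ℂ) * τ₁ + d))
         (((a : ℂ) * τ₂ + b) / ((c : ℂ) * τ₂ + d))
      = ((c : ℂ) * (starRingEnd ℂ) τ₁ + d) ^ 2 * Q₂ q τ₁ τ₂ := by
  have hdenom : ∀ τ : ℂ, 0 < τ.im → (c : ℂ) * τ + d ≠ 0 := by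
    intro τ hτ h
    have hi := congrArg Complex.im h
    have hr := congrArg Complex.re h
    simp [Complex.add_im, Complex.add_re, Complex.mul_im, Complex.mul_re] at hi hr
    have hc : c = 0 := by
      rcases hi with hi | hi
      · exact hi
      · exact absurd hi hτ.ne'
    rw [hc] at hr
    simp at hr
    rw [hc, hr] at hdet
    simp at hdet
  have hd1 : (c : ℂ) * τ₁ + d ≠ 0 := hdenom τ₁ h₁
  have hd2 : (c : ℂ) * τ₂ + d ≠ 0 := hdenom τ₂ h₂
  have hE : (c : ℂ) * (starRingEnd ℂ) τ₁ + d ≠ 0 := by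
    intro h
    apply hd1
    have := congrArg (starRingEnd ℂ) h
    simpa using this
  have hE' : (starRingEnd ℂ) τ₁ * (c : ℂ) + d ≠ 0 := by rw [mul_comm]; exact hE
  have hd1' : τ₁ * (c : ℂ) + d ≠ 0 := by rw [mul_comm]; exact hd1
  have hd2' : τ₂ * (c : ℂ) + d ≠ 0 := by rw [mul_comm]; exact hd2
  have hv : ((τ₁.im : ℝ) : ℂ) ≠ 0 := by
    exact_mod_cast h₁.ne'
  have hsub : (starRingEnd ℂ) τ₁ - τ₂ ≠ 0 := by
    intro h
    have := congrArg Complex.im h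
    simp [Complex.sub_im, Complex.conj_im] at this
    have : τ₂.im = -τ₁.im := by linarith [this]
    nlinarith [h₁, h₂]
  have hdetC : (a : ℂ) * d - b * c = 1 := by exact_mod_cast hdet
  have hrel : τ₁ - (starRingEnd ℂ) τ₁ = 2 * (τ₁.im : ℂ) * Complex.I := by
    rw [Complex.sub_conj]; push_cast; ring
  -- conjugate of the Möbius image
  have hconj : (starRingEnd ℂ) (((a : ℂ) * τ₁ + b) / ((c : ℂ) * τ₁ + d))
      = ((a : ℂ) * (starRingEnd ℂ) τ₁ + b) / ((c : ℂ) * (starRingEnd ℂ) τ₁ + d) := by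
    simp [map_div₀]
  -- key 1 : the difference transforms
  have key1 : (starRingEnd ℂ) (((a : ℂ) * τ₁ + b) / ((c : ℂ) * τ₁ + d))
        - ((a : ℂ) * τ₂ + b) / ((c : ℂ) * τ₂ + d)
      = ((starRingEnd ℂ) τ₁ - τ₂) / (((c : ℂ) * (starRingEnd ℂ) τ₁ + d) * ((c : ℂ) * τ₂ + d)) := by
    rw [hconj]
    field_simp
    ring_nf
    linear_combination ((starRingEnd ℂ) τ₁ - τ₂) * hdetC
  -- key 2 : the imaginary part transforms
  have key2 : (((((a : ℂ) * τ₁ + b) / ((c : ℂ) * τ₁ + d)).im : ℝ) : ℂ)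
      = (τ₁.im : ℂ) / (((c : ℂ) * τ₁ + d) * ((c : ℂ) * (starRingEnd ℂ) τ₁ + d)) := by
    have him : ∀ z : ℂ, (z.im : ℂ) = (z - (starRingEnd ℂ) z) / (2 * Complex.I) := by
      intro z
      rw [Complex.sub_conj]
      push_cast
      field_simp
    rw [him, hconj]
    field_simp
    linear_combination (τ₁ - (starRingEnd ℂ) τ₁) * hdetC + hrel
  rw [Q₂, Q₂, key1, key2]
  have h2I : (2 : ℂ) * Complex.I ≠ 0 := by simp [Complex.I_ne_zero]
  field_simp
  have hI : Complex.I * Complex.I = -1 := Complex.I_mul_I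
  linear_combination q * c * ((starRingEnd ℂ) τ₁ - τ₂) * Complex.I * hrel + q * c * ((starRingEnd ℂ) τ₁ - τ₂) * 2 * (τ₁.im : ℂ) * hI
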